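/- Suppose that assumptions (A1) and (A2) hold. Then for Lebesgue-almost every x ∈ [0,1), A_{m(h)}^{−1/2+δ/8} · Σ_{k=k_0(x,h)+1}^{m(h)} |a_k| → 0 as h ↓ 0. -/

import Mathlib

open MeasureTheory Filter Real Set Topology Asymptotics

noncomputable section

/-- distance from `x` to its nearest integer -/
def distInt (x : ℝ) : ℝ := |x - round x|

/-- the Takagi--van der Waerden class function `f_{r,a}` -/
def tvdW (r : ℕ) (a : ℕ → ℝ) (x : ℝ) : ℝ :=
  ∑' k : ℕ, a (k + 1) / (r : ℝ) ^ k * distInt ((r : ℝ) ^ k * x)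

/-- `ψ_k(x) = r^{-(k-1)} d(r^{k-1} x)` -/
def psi (r k : ℕ) (x : ℝ) : ℝ := distInt ((r : ℝ) ^ (k - 1) * x) / (r : ℝ) ^ (k - 1)

/-- right-hand derivative of `ψ_k` -/
def psiPlus (r k : ℕ) (x : ℝ) : ℝ := derivWithin (psi r k) (Set.Ici x) x

/-- `w_n(x) = Σ_{k=1}^n a_k ψ_k⁺(x)` -/
def wSum (r : ℕ) (a : ℕ → ℝ) (n : ℕ) (x : ℝ) : ℝ :=
  ∑ k ∈ Finset.Icc 1 n, a k * psiPlus r k x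

/-- `V_n = ∫_0^1 w_n(x)² dx` -/
def Vvar (r : ℕ) (a : ℕ → ℝ) (n : ℕ) : ℝ := ∫ x in (0:ℝ)..1, (wSum r a n x) ^ 2

/-- `A_n = Σ_{k=1}^n a_k²` -/
def Asum (a : ℕ → ℝ) (n : ℕ) : ℝ := ∑ k ∈ Finset.Icc 1 n, (a k) ^ 2

/-- `m(h) = ⌊log_r (1/|h|)⌋` -/
def mIdx (r : ℕ) (h : ℝ) : ℕ := (⌊Real.logb r (1 / |h|)⌋).toNat

/-- a standard Brownian motion on a probability space -/
structure IsStdBM {Ω : Type*} [MeasurableSpace Ω] (P : Measure Ω) (B : ℝ → Ω → ℝ) : Prop where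
  meas : ∀ t, Measurable (B t)
  zero : ∀ᵐ ω ∂P, B 0 ω = 0
  cont : ∀ᵐ ω ∂P, Continuous fun t => B t ω
  gauss : ∀ s t : ℝ, 0 ≤ s → s ≤ t →
    P.map (fun ω => B t ω - B s ω) = ProbabilityTheory.gaussianReal 0 ((t - s).toNNReal)
  indep : ∀ (n : ℕ) (ts : Fin (n + 1) → ℝ), Monotone ts → (∀ i, 0 ≤ ts i) →
    ProbabilityTheory.iIndepFun
      (fun i : Fin n => fun ω => B (ts i.succ) ω - B (ts i.castSucc) ω) P

end

/-- `k_0(x,h)`: the largest `k ≥ 0` such that the `r`-ary digits `ε_0,…,ε_k` of `x` and of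
`x+h` coincide (equivalently `⌊r^k x⌋ = ⌊r^k (x+h)⌋`), and `−1` if already `ε_0 ≠ ε_0'`. -/
noncomputable def kZero (r : ℕ) (x h : ℝ) : ℤ :=
  sSup {k : ℤ | k = -1 ∨ (0 ≤ k ∧ ⌊(r : ℝ) ^ k.toNat * x⌋ = ⌊(r : ℝ) ^ k.toNat * (x + h)⌋)}

/-- measure of the set where the fractional part of `n x` is within `c` of `1`. -/
lemma vol_fract_le (n : ℕ) (hn : 1 ≤ n) (c : ℝ) (hc0 : 0 ≤ c) :
    volume {x ∈ Set.Ico (0:ℝ) 1 | 1 - c ≤ Int.fract ((n:ℝ) * x)} ≤ ENNReal.ofReal c := by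
  have hnR : (0:ℝ) < (n:ℝ) := by exact_mod_cast hn
  have hsub : {x ∈ Set.Ico (0:ℝ) 1 | 1 - c ≤ Int.fract ((n:ℝ) * x)} ⊆
      ⋃ i ∈ Finset.range n, Set.Ico (((i:ℝ) + 1 - c)/n) (((i:ℝ) + 1)/n) := by
    rintro x ⟨⟨hx0, hx1⟩, hfr⟩
    have hy0 : (0:ℝ) ≤ (n:ℝ) * x := by positivity
    have hyn : (n:ℝ) * x < n := by
      calc (n:ℝ) * x < (n:ℝ) * 1 := by
            exact mul_lt_mul_of_pos_left hx1 hnR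
        _ = n := mul_one _
    set y := (n:ℝ) * x with hy
    have hfl0 : 0 ≤ ⌊y⌋ := Int.floor_nonneg.2 hy0
    set i := ⌊y⌋.toNat with hi
    have hiy : (i:ℝ) = (⌊y⌋ : ℝ) := by exact_mod_cast congrArg Int.cast (Int.toNat_of_nonneg hfl0)
    have hiln : i < n := by
      have : (⌊y⌋:ℝ) < n := lt_of_le_of_lt (Int.floor_le y) hyn
      have : (i:ℝ) < (n:ℝ) := by rw [hiy]; exact this
      exact_mod_cast this
    refine Set.mem_biUnion (Finset.mem_range.2 hiln) ?_
    have hfract : Int.fract y = y - i := by rw [Int.fract, hiy]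
    constructor
    · rw [div_le_iff₀ hnR]
      have : (i:ℝ) + 1 - c ≤ y := by
        have := hfr
        rw [hfract] at this
        linarith
      linarith [this]
    · rw [lt_div_iff₀ hnR]
      have := Int.lt_floor_add_one y
      rw [← hiy] at this
      linarith
  calc volume {x ∈ Set.Ico (0:ℝ) 1 | 1 - c ≤ Int.fract ((n:ℝ) * x)}
      ≤ volume (⋃ i ∈ Finset.range n, Set.Ico (((i:ℝ) + 1 - c)/n) (((i:ℝ) + 1)/n)) :=
        measure_mono hsub
    _ ≤ ∑ i ∈ Finset.range n, volume (Set.Ico (((i:ℝ) + 1 - c)/n) (((i:ℝ) + 1)/n)) :=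
        measure_biUnion_finset_le _ _
    _ = ∑ i ∈ Finset.range n, ENNReal.ofReal (c / n) := by
        refine Finset.sum_congr rfl fun i _ => ?_
        rw [Real.volume_Ico]
        congr 1
        field_simp
        ring
    _ = (n : ENNReal) * ENNReal.ofReal (c / n) := by
        rw [Finset.sum_const, Finset.card_range, nsmul_eq_mul]
    _ = ENNReal.ofReal ((n:ℝ) * (c / n)) := by
        rw [ENNReal.ofReal_mul (le_of_lt hnR), ENNReal.ofReal_natCast]
    _ = ENNReal.ofReal c := by rw [mul_div_cancel₀ _ (ne_of_gt hnR)]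

lemma kZero_bddAbove (r : ℕ) (hr : 2 ≤ r) (x h : ℝ) (hh : 0 < h) :
    BddAbove {k : ℤ | k = -1 ∨ (0 ≤ k ∧ ⌊(r : ℝ) ^ k.toNat * x⌋ = ⌊(r : ℝ) ^ k.toNat * (x + h)⌋)} := by
  refine ⟨⌈1/h⌉, fun j hj => ?_⟩
  rcases hj with hj | ⟨hj0, hjf⟩
  · rw [hj]
    have : (0:ℤ) < ⌈1/h⌉ := Int.ceil_pos.2 (by positivity)
    omega
  · set y := (r:ℝ) ^ j.toNat * x with hy
    have hre : (r:ℝ) ^ j.toNat * (x + h) = y + (r:ℝ) ^ j.toNat * h := by ring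
    have hlt : (r:ℝ) ^ j.toNat * h < 1 := by
      by_contra hcon
      push_neg at hcon
      have h1 : (⌊y⌋ : ℝ) ≤ y := Int.floor_le y
      have h2 : y + (r:ℝ) ^ j.toNat * h < ⌊y + (r:ℝ) ^ j.toNat * h⌋ + 1 :=
        Int.lt_floor_add_one _
      rw [← hre, ← hjf] at h2
      linarith
    have hpow : ((j.toNat : ℝ)) < (r:ℝ) ^ j.toNat := by
      have := Nat.lt_pow_self (n := j.toNat) (show 1 < r by omega)
      exact_mod_cast this
    have hjR : ((j.toNat : ℝ)) < 1/h := by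
      have hrp : (0:ℝ) < (r:ℝ) ^ j.toNat := by positivity
      rw [lt_div_iff₀ hh]
      calc (j.toNat : ℝ) * h ≤ (r:ℝ) ^ j.toNat * h := by
            apply mul_le_mul_of_nonneg_right (le_of_lt hpow) (le_of_lt hh)
        _ < 1 := hlt
    have : (j.toNat : ℤ) ≤ ⌈1/h⌉ := le_of_lt (Int.lt_ceil.2 hjR)
    omega

lemma kZero_ge (r : ℕ) (hr : 2 ≤ r) (x h : ℝ) (hh : 0 < h) (j : ℕ)
    (hfl : Int.fract ((r:ℝ)^j * x) + (r:ℝ)^j * h < 1) : (j:ℤ) ≤ kZero r x h := by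
  apply le_csSup (kZero_bddAbove r hr x h hh)
  right
  refine ⟨Int.ofNat_nonneg j, ?_⟩
  have htn : ((j:ℤ)).toNat = j := rfl
  rw [htn]
  set y := (r:ℝ) ^ j * x with hy
  have hre : (r:ℝ) ^ j * (x + h) = y + (r:ℝ) ^ j * h := by ring
  rw [hre]
  symm
  apply Int.floor_eq_iff.2
  constructor
  · have h1 : (⌊y⌋ : ℝ) ≤ y := Int.floor_le y
    have hp : (0:ℝ) ≤ (r:ℝ)^j * h := by positivity
    linarith
  · have : Int.fract y = y - ⌊y⌋ := rfl
    have h2 : y + (r:ℝ)^j * h < ⌊y⌋ + 1 := by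
      have := hfl
      rw [Int.fract] at this
      push_cast
      push_cast at this
      linarith
    exact h2

lemma mIdx_h_le (r : ℕ) (hr : 2 ≤ r) (h : ℝ) (h0 : 0 < h) (h1 : h ≤ 1) :
    h ≤ ((r:ℝ) ^ (mIdx r h))⁻¹ := by
  have hrR : (1:ℝ) < (r:ℝ) := by exact_mod_cast hr.trans_lt' one_lt_two
  have hinv : (1:ℝ) ≤ 1/|h| := by
    rw [abs_of_pos h0]
    rw [le_div_iff₀ h0]; linarith
  have hlog : 0 ≤ Real.logb r (1/|h|) := Real.logb_nonneg hrR hinv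
  set y := Real.logb r (1/|h|) with hy
  have hfl : (0:ℤ) ≤ ⌊y⌋ := Int.floor_nonneg.2 hlog
  have hmle : ((mIdx r h : ℕ) : ℝ) ≤ y := by
    have : ((⌊y⌋.toNat : ℤ) : ℝ) = ((⌊y⌋ : ℤ) : ℝ) := by
      exact_mod_cast congrArg Int.cast (Int.toNat_of_nonneg hfl)
    calc ((mIdx r h : ℕ) : ℝ) = ((⌊y⌋ : ℤ) : ℝ) := by
          rw [mIdx]; exact_mod_cast this
      _ ≤ y := Int.floor_le y
  have hpow : (r:ℝ) ^ (mIdx r h) ≤ 1/|h| := by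
    calc (r:ℝ) ^ (mIdx r h) = (r:ℝ) ^ ((mIdx r h : ℕ) : ℝ) := (Real.rpow_natCast _ _).symm
      _ ≤ (r:ℝ) ^ y := Real.rpow_le_rpow_of_exponent_le (le_of_lt hrR) hmle
      _ = 1/|h| := Real.rpow_logb (by linarith) (ne_of_gt hrR) (by positivity)
  rw [abs_of_pos h0] at hpow
  have hrp : (0:ℝ) < (r:ℝ) ^ (mIdx r h) := by positivity
  rw [le_inv_comm₀ h0 hrp]
  rw [div_eq_mul_inv, one_mul] at hpow
  exact hpow
lemma mIdx_ge (r : ℕ) (hr : 2 ≤ r) (M : ℕ) (h : ℝ) (h0 : 0 < h)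
    (hlt : h < ((r:ℝ) ^ M)⁻¹) : M ≤ mIdx r h := by
  have hrR : (1:ℝ) < (r:ℝ) := by exact_mod_cast hr.trans_lt' one_lt_two
  have hrp : (0:ℝ) < (r:ℝ) ^ M := by positivity
  have hgt : (r:ℝ) ^ M < 1/|h| := by
    rw [abs_of_pos h0, lt_div_iff₀ h0]
    calc (r:ℝ)^M * h < (r:ℝ)^M * ((r:ℝ)^M)⁻¹ := by
          exact mul_lt_mul_of_pos_left hlt hrp
      _ = 1 := mul_inv_cancel₀ (ne_of_gt hrp)
  have hlog : (M : ℝ) ≤ Real.logb r (1/|h|) := by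
    calc (M:ℝ) = Real.logb r ((r:ℝ)^M) := by
          rw [← Real.rpow_natCast (r:ℝ) M, Real.logb_rpow (by linarith) (ne_of_gt hrR)]
      _ ≤ Real.logb r (1/|h|) := Real.logb_le_logb_of_le hrR (by positivity) (le_of_lt hgt)
  have : (M:ℤ) ≤ ⌊Real.logb r (1/|h|)⌋ := Int.le_floor.2 hlog
  rw [mIdx]
  exact (Int.le_toNat (le_trans (by exact_mod_cast Nat.zero_le M) this)).2 this

lemma tele_ineq (η aa bb : ℝ) (hη : 0 < η) (ha : 1 ≤ aa) (hab : aa ≤ bb) :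
    (bb - aa) * (bb ^ (1+η))⁻¹ ≤ η⁻¹ * ((aa ^ η)⁻¹ - (bb ^ η)⁻¹) := by
  have ha0 : (0:ℝ) < aa := lt_of_lt_of_le one_pos ha
  have hb0 : (0:ℝ) < bb := lt_of_lt_of_le ha0 hab
  have hA : (0:ℝ) < aa ^ η := Real.rpow_pos_of_pos ha0 η
  have hB : (0:ℝ) < bb ^ η := Real.rpow_pos_of_pos hb0 η
  have hBA : aa ^ η ≤ bb ^ η := Real.rpow_le_rpow (le_of_lt ha0) hab (le_of_lt hη)
  have hsplit : bb ^ (1+η) = bb * bb ^ η := by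
    rw [Real.rpow_add hb0, Real.rpow_one]
  have ht0 : (0:ℝ) < bb/aa := by positivity
  have hlog : 1 - aa/bb ≤ Real.log (bb/aa) := by
    have h1 := Real.log_le_sub_one_of_pos (show (0:ℝ) < aa/bb by positivity)
    have h2 : Real.log (aa/bb) = - Real.log (bb/aa) := by
      rw [← Real.log_inv]
      congr 1
      rw [inv_div]
    rw [h2] at h1
    linarith
  have hexp : η * Real.log (bb/aa) + 1 ≤ (bb/aa) ^ η := by
    rw [Real.rpow_def_of_pos ht0, mul_comm]
    exact Real.add_one_le_exp _
  have hdiv : (bb/aa) ^ η = bb ^ η / aa ^ η := Real.div_rpow (le_of_lt hb0) (le_of_lt ha0) η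
  have hstep : η * (1 - aa/bb) + 1 ≤ bb ^ η / aa ^ η := by
    rw [← hdiv]
    nlinarith [hlog, hexp, hη.le]
  have key : η * ((bb - aa) * aa ^ η) ≤ bb * (bb ^ η - aa ^ η) := by
    have h3 : (η * (1 - aa/bb) + 1) * (aa ^ η * bb) ≤ (bb ^ η / aa ^ η) * (aa ^ η * bb) :=
      mul_le_mul_of_nonneg_right hstep (by positivity)
    have h4 : (bb ^ η / aa ^ η) * (aa ^ η * bb) = bb ^ η * bb := by
      field_simp
    have h6 : (η * (1 - aa/bb) + 1) * (aa ^ η * bb) = η * ((bb - aa) * aa ^ η) + aa ^ η * bb := by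
      field_simp
    linarith [h3, h4 ▸ h3, h6]
  rw [hsplit]
  have hL : (bb - aa) * (bb * bb ^ η)⁻¹ = (bb - aa) / (bb * bb ^ η) := by
    rw [div_eq_mul_inv]
  have hR : η⁻¹ * ((aa ^ η)⁻¹ - (bb ^ η)⁻¹) = (bb ^ η - aa ^ η) / (η * (aa ^ η * bb ^ η)) := by
    field_simp
  rw [hL, hR, div_le_div_iff₀ (by positivity) (by positivity)]
  nlinarith [mul_le_mul_of_nonneg_right key (le_of_lt hB)]

lemma Asum_nonneg (a : ℕ → ℝ) (n : ℕ) : 0 ≤ Asum a n :=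
  Finset.sum_nonneg fun k _ => sq_nonneg _

lemma Asum_mono (a : ℕ → ℝ) : Monotone (Asum a) := by
  intro i j hij
  exact Finset.sum_le_sum_of_subset_of_nonneg
    (Finset.Icc_subset_Icc le_rfl hij) (fun k _ _ => sq_nonneg _)

lemma Asum_diff (a : ℕ → ℝ) (j : ℕ) : a (j+1) ^ 2 = Asum a (j+1) - Asum a j := by
  have := Finset.sum_Icc_succ_top (show 1 ≤ j + 1 by omega) (fun k => a k ^ 2)
  rw [Asum, Asum, this]
  ring


set_option maxHeartbeats 2000000 in
lemma main_eps (r : ℕ) (hr : 2 ≤ r) (a : ℕ → ℝ) (δ : ℝ) (hδ : δ ∈ Set.Ioc (0:ℝ) 1)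
    (hA1 : Tendsto (Asum a) atTop atTop)
    (hA2 : (fun n => (a n) ^ 2) =O[atTop] fun n => Asum a n ^ (1 - δ))
    (ε : ℝ) (hε : 0 < ε) :
    ∀ᵐ x ∂(volume.restrict (Set.Ico (0:ℝ) 1)), ∀ᶠ m in atTop, ∀ h : ℝ, 0 < h →
      h ≤ ((r:ℝ) ^ m)⁻¹ →
      (∑ k ∈ Finset.Icc (kZero r x h + 1).toNat m, |a k|) ≤ ε * Asum a m ^ ((1:ℝ)/2 - δ/8) := by
  classical
  obtain ⟨hδ0, hδ1⟩ := hδ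
  set A := Asum a with hA
  set β := (1:ℝ)/2 - δ/8 with hβ
  set η := δ/8 with hη
  set γ := (1-δ)/2 with hγ
  set s : ℝ := 15/16 with hs
  set θ : ℝ := 225/256 with hθ
  have hθs : θ = s^2 := by norm_num [hθ, hs]
  set W : ℝ := 9 with hW
  have hθ0 : (0:ℝ) ≤ θ := by norm_num [hθ]
  have hθ1 : θ < 1 := by norm_num [hθ]
  have hA0 : ∀ n, 0 ≤ A n := Asum_nonneg a
  have hAmono : Monotone A := Asum_mono a
  have hrR1 : (1:ℝ) < (r:ℝ) := by exact_mod_cast hr.trans_lt' one_lt_two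
  -- extract big-O constants
  obtain ⟨C₀, hC₀⟩ := hA2.isBigOWith
  rw [Asymptotics.isBigOWith_iff, eventually_atTop] at hC₀
  obtain ⟨K₀, hK₀⟩ := hC₀
  set C := max C₀ 0 with hC
  have hC0 : 0 ≤ C := le_max_right _ _
  have hCb : ∀ n, K₀ ≤ n → a n ^ 2 ≤ C * A n ^ (1-δ) := by
    intro n hn
    have h1 := hK₀ n hn
    have h2 : ‖a n ^ 2‖ = a n ^ 2 := by
      rw [Real.norm_eq_abs, abs_of_nonneg (sq_nonneg _)]
    have h3 : ‖A n ^ (1-δ)‖ = A n ^ (1-δ) := by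
      rw [Real.norm_eq_abs, abs_of_nonneg (Real.rpow_nonneg (hA0 n) _)]
    rw [h2, h3] at h1
    calc a n ^ 2 ≤ C₀ * A n ^ (1-δ) := h1
      _ ≤ C * A n ^ (1-δ) := by
          apply mul_le_mul_of_nonneg_right (le_max_left _ _) (Real.rpow_nonneg (hA0 n) _)
  -- eventual lower bound on A
  obtain ⟨K₂, hK₂⟩ := (hA1.eventually_ge_atTop 1).exists_forall_of_atTop
  set K₀' := max K₀ 1 with hK₀'
  set K₁ := max (max K₀' K₂) 2 with hK₁
  have hK₁2 : 2 ≤ K₁ := le_max_right _ _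
  have hA1' : ∀ m, K₁ ≤ m → 1 ≤ A m := fun m hm =>
    hK₂ m (le_trans (le_trans (le_max_right _ _) (le_max_left _ _)) hm)
  set SC := ∑ k ∈ Finset.range K₀', a k ^ 2 with hSC
  have hSC0 : 0 ≤ SC := Finset.sum_nonneg fun k _ => sq_nonneg _
  set C₂ := C + SC with hC₂
  have hC₂0 : 0 ≤ C₂ := by positivity
  have hkey : ∀ m, K₁ ≤ m → ∀ k, k ≤ m → a k ^ 2 ≤ C₂ * A m ^ (1-δ) := by
    intro m hm k hk
    have hrp0 : (0:ℝ) ≤ A m ^ (1-δ) := Real.rpow_nonneg (hA0 m) _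
    have hpow1 : 1 ≤ A m ^ (1-δ) := by
      have := Real.rpow_le_rpow_of_exponent_le (hA1' m hm) (show (0:ℝ) ≤ 1-δ by linarith)
      rwa [Real.rpow_zero] at this
    by_cases hcase : k < K₀'
    · have h1 : a k ^ 2 ≤ SC :=
        Finset.single_le_sum (fun i _ => sq_nonneg (a i)) (Finset.mem_range.2 hcase)
      calc a k ^ 2 ≤ SC := h1
        _ = SC * 1 := (mul_one _).symm
        _ ≤ SC * A m ^ (1-δ) := mul_le_mul_of_nonneg_left hpow1 hSC0
        _ ≤ C₂ * A m ^ (1-δ) := mul_le_mul_of_nonneg_right (by simp only [hC₂]; linarith) hrp0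
    · push_neg at hcase
      have hk0 : K₀ ≤ k := le_trans (le_max_left _ _) hcase
      calc a k ^ 2 ≤ C * A k ^ (1-δ) := hCb k hk0
        _ ≤ C * A m ^ (1-δ) := by
            apply mul_le_mul_of_nonneg_left _ hC0
            exact Real.rpow_le_rpow (hA0 k) (hAmono hk) (by linarith)
        _ ≤ C₂ * A m ^ (1-δ) := mul_le_mul_of_nonneg_right (by simp only [hC₂]; linarith) hrp0
  set KK := Real.sqrt C₂ with hKK
  have hKK0 : 0 ≤ KK := Real.sqrt_nonneg _
  have habs : ∀ m, K₁ ≤ m → ∀ k, k ≤ m → |a k| ≤ KK * A m ^ γ := by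
    intro m hm k hk
    have hsq : √(A m ^ (1-δ)) = A m ^ γ := by
      rw [Real.sqrt_eq_rpow, ← Real.rpow_mul (hA0 m) (1-δ) (1/2)]
      congr 1
      rw [hγ]; ring
    calc |a k| = √(a k ^ 2) := (Real.sqrt_sq_eq_abs _).symm
      _ ≤ √(C₂ * A m ^ (1-δ)) := Real.sqrt_le_sqrt (hkey m hm k hk)
      _ = KK * √(A m ^ (1-δ)) := by rw [Real.sqrt_mul hC₂0, hKK]
      _ = KK * A m ^ γ := by rw [hsq]
  -- the maximal good window length
  set P : ℕ → ℕ → Prop := fun m L => (∑ k ∈ Finset.Icc (m-L+1) m, |a k|) ≤ ε * A m ^ β with hP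
  set Λ : ℕ → ℕ := fun m => Nat.findGreatest (P m) (m-1) with hΛ
  have hP0 : ∀ m, P m 0 := by
    intro m
    show (∑ k ∈ Finset.Icc (m-0+1) m, |a k|) ≤ ε * A m ^ β
    rw [Finset.Icc_eq_empty (by omega)]
    simp only [Finset.sum_empty]
    exact mul_nonneg hε.le (Real.rpow_nonneg (hA0 m) _)
  have hPΛ : ∀ m, P m (Λ m) := fun m => Nat.findGreatest_spec (Nat.zero_le _) (hP0 m)
  have hΛle : ∀ m, Λ m ≤ m - 1 := fun m => Nat.findGreatest_le _
  set Bad : ℕ → Set ℝ := fun m =>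
    {x ∈ Set.Ico (0:ℝ) 1 | 1 - ((r:ℝ) ^ (Λ m))⁻¹ ≤ Int.fract ((r:ℝ) ^ (m - Λ m) * x)} with hBad
  -- weights
  set D : ℕ → ℝ := fun k => (A (max k K₁) ^ (1+η))⁻¹ with hD
  have hD0 : ∀ k, 0 ≤ D k := by
    intro k
    have h : (0:ℝ) < A (max k K₁) := lt_of_lt_of_le one_pos (hA1' _ (le_max_right _ _))
    show (0:ℝ) ≤ (A (max k K₁) ^ (1+η))⁻¹
    positivity
  set F : ℕ → ℝ := fun m => ∑ k ∈ Finset.Icc 1 m, θ^(m-k) * (a k^2 * D k) with hF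
  have hF0 : ∀ m, 0 ≤ F m := by
    intro m
    apply Finset.sum_nonneg
    intro k _
    have := hD0 k
    positivity
  set C₄ := ε⁻¹^3 * W^2 * KK with hC₄
  have hC₄0 : 0 ≤ C₄ := by positivity
  set b : ℕ → ℝ := fun m => ((r:ℝ)^(m-1))⁻¹ + C₄ * F m with hb
  have hb0 : ∀ m, 0 ≤ b m := by
    intro m
    have h1 : (0:ℝ) ≤ ((r:ℝ)^(m-1))⁻¹ := by positivity
    have h2 := hF0 m
    exact add_nonneg h1 (mul_nonneg hC₄0 h2)
  -- numeric bound
  have hnum : ∀ m, K₁ ≤ m → ((r:ℝ)^(Λ m))⁻¹ ≤ b m := by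
    intro m hm
    have hm2 : 2 ≤ m := le_trans hK₁2 hm
    have hAm1 : 1 ≤ A m := hA1' m hm
    have hAmpos : (0:ℝ) < A m := lt_of_lt_of_le one_pos hAm1
    have hAβpos : (0:ℝ) < A m ^ β := Real.rpow_pos_of_pos hAmpos β
    have hεA : (0:ℝ) < ε * A m ^ β := mul_pos hε hAβpos
    have hWsum : (∑ k ∈ Finset.Icc 1 m, θ ^ (m-k)) ≤ W := by
      have hre : ∑ k ∈ Finset.Icc 1 m, θ^(m-k) = ∑ j ∈ Finset.range m, θ^j := by
        apply Finset.sum_nbij' (i := fun k => m - k) (j := fun j => m - j)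
        · intro k hk
          have := Finset.mem_Icc.1 hk
          exact Finset.mem_range.2 (by omega)
        · intro j hj
          have := Finset.mem_range.1 hj
          exact Finset.mem_Icc.2 (by omega)
        · intro k hk
          have := Finset.mem_Icc.1 hk
          omega
        · intro j hj
          have := Finset.mem_range.1 hj
          omega
        · intro k _
          rfl
      rw [hre]
      have h9 := Summable.sum_le_tsum (Finset.range m) (fun j _ => pow_nonneg hθ0 j)
        (summable_geometric_of_lt_one hθ0 hθ1)
      rw [tsum_geometric_of_lt_one hθ0 hθ1] at h9
      refine le_trans h9 ?_
      rw [hθ, hW]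
      norm_num
    by_cases hcase : Λ m = m - 1
    · show ((r:ℝ)^(Λ m))⁻¹ ≤ ((r:ℝ)^(m-1))⁻¹ + C₄ * F m
      rw [hcase]
      have := mul_nonneg hC₄0 (hF0 m)
      linarith
    · have hΛlt : Λ m < m - 1 := lt_of_le_of_ne (hΛle m) hcase
      have hnot : ¬ P m (Λ m + 1) :=
        Nat.findGreatest_is_greatest (Nat.lt_succ_self _) (by omega)
      simp only [hP] at hnot
      rw [not_le] at hnot
      have hidx : m - (Λ m + 1) + 1 = m - Λ m := by omega
      rw [hidx] at hnot
      set L := Λ m with hLdef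
      set G := ∑ k ∈ Finset.Icc 1 m, θ^(m-k) * |a k| with hG
      have hG0 : (0:ℝ) ≤ G := Finset.sum_nonneg fun k _ => by positivity
      have h1 : θ^L * (ε * A m ^ β) ≤ G := by
        calc θ^L * (ε * A m ^ β) ≤ θ^L * ∑ k ∈ Finset.Icc (m-L) m, |a k| :=
              mul_le_mul_of_nonneg_left (le_of_lt hnot) (pow_nonneg hθ0 L)
          _ = ∑ k ∈ Finset.Icc (m-L) m, θ^L * |a k| := Finset.mul_sum _ _ _
          _ ≤ ∑ k ∈ Finset.Icc (m-L) m, θ^(m-k) * |a k| := by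
              apply Finset.sum_le_sum
              intro k hk
              have hk' := Finset.mem_Icc.1 hk
              have h10 : θ^L ≤ θ^(m-k) :=
                pow_le_pow_of_le_one hθ0 (le_of_lt hθ1) (by omega)
              exact mul_le_mul_of_nonneg_right h10 (abs_nonneg _)
          _ ≤ G := Finset.sum_le_sum_of_subset_of_nonneg
              (Finset.Icc_subset_Icc (by omega) le_rfl) (fun k _ _ => by positivity)
      have hθLle : θ^L ≤ G / (ε * A m ^ β) := (le_div_iff₀ hεA).2 h1
      have hrL : ((r:ℝ)^L)⁻¹ ≤ (θ^L)^3 := by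
        have h2 : ((r:ℝ)⁻¹) ≤ θ^3 := by
          have hle2 : (2:ℝ) ≤ (r:ℝ) := by exact_mod_cast hr
          have h3 : ((r:ℝ))⁻¹ ≤ (2:ℝ)⁻¹ := by
            apply inv_anti₀
            · norm_num
            · exact hle2
          refine le_trans h3 ?_
          rw [hθ]
          norm_num
        calc ((r:ℝ)^L)⁻¹ = ((r:ℝ)⁻¹)^L := by rw [inv_pow]
          _ ≤ (θ^3)^L := pow_le_pow_left₀ (by positivity) h2 L
          _ = (θ^L)^3 := by rw [← pow_mul, ← pow_mul, Nat.mul_comm]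
      have hθL0 : (0:ℝ) ≤ θ^L := pow_nonneg hθ0 L
      have h4 : (θ^L)^3 ≤ (G / (ε * A m ^ β))^3 := pow_le_pow_left₀ hθL0 hθLle 3
      have hKA0 : (0:ℝ) ≤ KK * A m ^ γ := mul_nonneg hKK0 (Real.rpow_nonneg (hA0 m) _)
      have hGb : G ≤ W * (KK * A m ^ γ) := by
        calc G ≤ ∑ k ∈ Finset.Icc 1 m, θ^(m-k) * (KK * A m ^ γ) := by
              apply Finset.sum_le_sum
              intro k hk
              exact mul_le_mul_of_nonneg_left
                (habs m hm k (Finset.mem_Icc.1 hk).2) (pow_nonneg hθ0 _)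
          _ = (∑ k ∈ Finset.Icc 1 m, θ^(m-k)) * (KK * A m ^ γ) := by
              rw [← Finset.sum_mul]
          _ ≤ W * (KK * A m ^ γ) := mul_le_mul_of_nonneg_right hWsum hKA0
      set H := ∑ k ∈ Finset.Icc 1 m, θ^(m-k) * a k^2 with hH
      have hH0 : (0:ℝ) ≤ H := Finset.sum_nonneg fun k _ => by positivity
      have hG2 : G^2 ≤ W * H := by
        have hCS := Finset.sum_mul_sq_le_sq_mul_sq (Finset.Icc 1 m)
          (fun k => s^(m-k)) (fun k => s^(m-k) * |a k|)
        have e1 : ∑ k ∈ Finset.Icc 1 m, s^(m-k) * (s^(m-k) * |a k|) = G := by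
          apply Finset.sum_congr rfl
          intro k _
          rw [hθs, ← mul_assoc, ← pow_add, ← two_mul, pow_mul]
        have e2 : ∑ k ∈ Finset.Icc 1 m, (s^(m-k))^2 = ∑ k ∈ Finset.Icc 1 m, θ^(m-k) := by
          apply Finset.sum_congr rfl
          intro k _
          rw [hθs, ← pow_mul, mul_comm, pow_mul]
        have e3 : ∑ k ∈ Finset.Icc 1 m, (s^(m-k) * |a k|)^2 = H := by
          apply Finset.sum_congr rfl
          intro k _
          rw [hθs, mul_pow, sq_abs, ← pow_mul, mul_comm (m-k) 2, pow_mul]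
        rw [e1, e2, e3] at hCS
        refine le_trans hCS ?_
        exact mul_le_mul_of_nonneg_right hWsum hH0
      have hpowid : A m ^ γ * ((A m ^ β)^3)⁻¹ = (A m ^ (1+η))⁻¹ := by
        have h5 : (A m ^ β)^(3:ℕ) = A m ^ (β*((3:ℕ):ℝ)) := by
          rw [Real.rpow_mul (hA0 m), Real.rpow_natCast]
        rw [h5, ← Real.rpow_neg (hA0 m), ← Real.rpow_add hAmpos]
        rw [← Real.rpow_neg (hA0 m)]
        congr 1
        push_cast
        rw [hγ, hβ, hη]
        ring
      have hHD : H * (A m ^ (1+η))⁻¹ ≤ F m := by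
        rw [Finset.sum_mul]
        apply Finset.sum_le_sum
        intro k hk
        have hDk : (A m ^ (1+η))⁻¹ ≤ D k := by
          have hmax : max k K₁ ≤ m := max_le (Finset.mem_Icc.1 hk).2 hm
          have h6 : A (max k K₁) ≤ A m := hAmono hmax
          have h7 : 1 ≤ A (max k K₁) := hA1' _ (le_max_right _ _)
          have h8 : (0:ℝ) < A (max k K₁) ^ (1+η) :=
            Real.rpow_pos_of_pos (by linarith) _
          apply inv_anti₀ h8
          exact Real.rpow_le_rpow (by linarith) h6 (by rw [hη]; linarith)
        calc θ^(m-k) * a k^2 * (A m ^ (1+η))⁻¹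
            = θ^(m-k) * (a k^2 * (A m ^ (1+η))⁻¹) := by ring
          _ ≤ θ^(m-k) * (a k^2 * D k) := by
              apply mul_le_mul_of_nonneg_left _ (pow_nonneg hθ0 _)
              exact mul_le_mul_of_nonneg_left hDk (sq_nonneg _)
      have hW0 : (0:ℝ) ≤ W := by rw [hW]; norm_num
      calc ((r:ℝ)^L)⁻¹ ≤ (G / (ε * A m ^ β))^3 := le_trans hrL h4
        _ = G * G^2 * ((ε * A m ^ β)^3)⁻¹ := by
            rw [div_pow, div_eq_mul_inv]
            ring
        _ ≤ (W * (KK * A m ^ γ)) * (W * H) * ((ε * A m ^ β)^3)⁻¹ := by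
            apply mul_le_mul_of_nonneg_right _ (by positivity)
            exact mul_le_mul hGb hG2 (by positivity) (by positivity)
        _ = C₄ * (H * (A m ^ γ * ((A m ^ β)^3)⁻¹)) := by
            rw [hC₄, mul_pow, mul_inv]
            ring
        _ = C₄ * (H * (A m ^ (1+η))⁻¹) := by rw [hpowid]
        _ ≤ C₄ * F m := by
            apply mul_le_mul_of_nonneg_left _ hC₄0
            exact le_trans (le_of_eq (by ring)) hHD
        _ ≤ b m := by
            show C₄ * F m ≤ ((r:ℝ)^(m-1))⁻¹ + C₄ * F m
            have : (0:ℝ) ≤ ((r:ℝ)^(m-1))⁻¹ := by positivity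
            linarith
  -- measure bound
  have hμ : ∀ m, (volume.restrict (Set.Ico (0:ℝ) 1)) (Bad m) ≤
      ENNReal.ofReal (((r:ℝ)^(Λ m))⁻¹) := by
    intro m
    have hcast : ((r ^ (m - Λ m) : ℕ) : ℝ) = (r:ℝ) ^ (m - Λ m) := by push_cast; rfl
    have h1 : (volume.restrict (Set.Ico (0:ℝ) 1)) (Bad m) ≤ volume (Bad m) :=
      Measure.le_iff'.1 Measure.restrict_le_self _
    refine le_trans h1 ?_
    have h2 := vol_fract_le (r ^ (m - Λ m)) (Nat.one_le_pow _ _ (by omega))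
      (((r:ℝ) ^ (Λ m))⁻¹) (by positivity)
    rw [hcast] at h2
    exact h2
  -- summability
  have hηpos : (0:ℝ) < η := by rw [hη]; linarith
  set c' : ℕ → ℝ := fun k => if k = 0 then 0 else a k^2 * D k with hc'
  have hc'0 : ∀ k, 0 ≤ c' k := by
    intro k
    show (0:ℝ) ≤ if k = 0 then 0 else a k^2 * D k
    split
    · exact le_rfl
    · exact mul_nonneg (sq_nonneg _) (hD0 k)
  have hc'le : ∀ k, c' k ≤ a k^2 * D k := by
    intro k
    show (if k = 0 then (0:ℝ) else a k^2 * D k) ≤ a k^2 * D k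
    split
    · exact mul_nonneg (sq_nonneg _) (hD0 k)
    · exact le_rfl
  have hu0 : ∀ j, (0:ℝ) ≤ (A j ^ η)⁻¹ := by
    intro j
    have := Real.rpow_nonneg (hA0 j) η
    positivity
  have htel : ∀ M, ∑ k ∈ Finset.Ico (K₁+1) M, c' k ≤ η⁻¹ * (A K₁ ^ η)⁻¹ := by
    intro M
    have hterm : ∀ k ∈ Finset.Ico (K₁+1) M, c' k ≤ η⁻¹ * ((A (k-1) ^ η)⁻¹ - (A k ^ η)⁻¹) := by
      intro k hk
      have hk1 := (Finset.mem_Ico.1 hk).1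
      have hkne : k ≠ 0 := by omega
      have hceq : c' k = a k^2 * D k := if_neg hkne
      have hmaxeq : max k K₁ = k := max_eq_left (by omega)
      have hAk1 : 1 ≤ A (k-1) := hA1' _ (by omega)
      have hAkk : A (k-1) ≤ A k := hAmono (by omega)
      have hdiff : a k ^ 2 = A k - A (k-1) := by
        obtain ⟨j, rfl⟩ : ∃ j, k = j + 1 := ⟨k - 1, by omega⟩
        have := Asum_diff a j
        simpa using this
      have htele := tele_ineq η (A (k-1)) (A k) hηpos hAk1 hAkk
      calc c' k = (A k - A (k-1)) * (A k ^ (1+η))⁻¹ := by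
            rw [hceq, hD]
            simp only [hmaxeq]
            rw [hdiff]
        _ ≤ η⁻¹ * ((A (k-1) ^ η)⁻¹ - (A k ^ η)⁻¹) := htele
    calc ∑ k ∈ Finset.Ico (K₁+1) M, c' k
        ≤ ∑ k ∈ Finset.Ico (K₁+1) M, η⁻¹ * ((A (k-1) ^ η)⁻¹ - (A k ^ η)⁻¹) :=
          Finset.sum_le_sum hterm
      _ = η⁻¹ * ∑ k ∈ Finset.Ico (K₁+1) M, ((A (k-1) ^ η)⁻¹ - (A k ^ η)⁻¹) := by
          rw [Finset.mul_sum]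
      _ ≤ η⁻¹ * (A K₁ ^ η)⁻¹ := by
          apply mul_le_mul_of_nonneg_left _ (by positivity)
          rw [Finset.sum_Ico_eq_sum_range]
          have heq : ∀ i, (A (K₁+1+i-1) ^ η)⁻¹ - (A (K₁+1+i) ^ η)⁻¹
              = (A (K₁+i) ^ η)⁻¹ - (A (K₁+(i+1)) ^ η)⁻¹ := by
            intro i
            have e1 : K₁+1+i-1 = K₁+i := by omega
            have e2 : K₁+1+i = K₁+(i+1) := by omega
            rw [e1, e2]
          rw [Finset.sum_congr rfl (fun i _ => heq i)]
          rw [Finset.sum_range_sub' (fun i => (A (K₁+i) ^ η)⁻¹)]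
          have h1 := hu0 (K₁ + (M - (K₁+1)))
          simp only [Nat.add_zero]
          linarith
  have hsumc : Summable c' := by
    apply summable_of_sum_range_le hc'0 (c := (∑ k ∈ Finset.range (K₁+1), a k^2 * D k)
      + η⁻¹ * (A K₁ ^ η)⁻¹)
    intro M
    have hB2 : (0:ℝ) ≤ η⁻¹ * (A K₁ ^ η)⁻¹ := mul_nonneg (by positivity) (hu0 _)
    rcases le_or_gt M (K₁+1) with hM | hM
    · have h1 : ∑ k ∈ Finset.range M, c' k ≤ ∑ k ∈ Finset.range (K₁+1), c' k :=
        Finset.sum_le_sum_of_subset_of_nonneg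
          (Finset.range_subset_range.2 hM) (fun k _ _ => hc'0 k)
      have h2 : ∑ k ∈ Finset.range (K₁+1), c' k ≤ ∑ k ∈ Finset.range (K₁+1), a k^2 * D k :=
        Finset.sum_le_sum (fun k _ => hc'le k)
      linarith
    · rw [Finset.range_eq_Ico, ← Finset.sum_Ico_consecutive _ (Nat.zero_le (K₁+1)) hM.le]
      rw [← Finset.range_eq_Ico]
      have h2 : ∑ k ∈ Finset.range (K₁+1), c' k ≤ ∑ k ∈ Finset.range (K₁+1), a k^2 * D k :=
        Finset.sum_le_sum (fun k _ => hc'le k)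
      have h3 := htel M
      linarith
  have hsumF : Summable F := by
    have hn1 : Summable (fun k => ‖c' k‖) := by
      apply Summable.congr hsumc
      intro k
      rw [Real.norm_eq_abs, abs_of_nonneg (hc'0 k)]
    have hn2 : Summable (fun j => ‖θ^j‖) := by
      apply Summable.congr (summable_geometric_of_lt_one hθ0 hθ1)
      intro j
      rw [Real.norm_eq_abs, abs_of_nonneg (pow_nonneg hθ0 j)]
    have h := summable_norm_sum_mul_range_of_summable_norm hn1 hn2
    have h' : Summable (fun n => ∑ k ∈ Finset.range (n+1), c' k * θ^(n-k)) :=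
      h.of_norm
    apply Summable.congr h'
    intro n
    show ∑ k ∈ Finset.range (n+1), c' k * θ^(n-k) = F n
    rw [hF]
    rw [← Finset.sum_subset (s₁ := Finset.Icc 1 n) (s₂ := Finset.range (n+1))
      (by intro k hk; have := Finset.mem_Icc.1 hk; exact Finset.mem_range.2 (by omega))
      (by
        intro k hk hk'
        have h1 := Finset.mem_range.1 hk
        have hk0 : k = 0 := by
          by_contra hc0
          exact hk' (Finset.mem_Icc.2 (by omega))
        rw [hk0]
        show c' 0 * θ^(n-0) = 0
        rw [hc']
        simp)]
    apply Finset.sum_congr rfl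
    intro k hk
    have hkne : k ≠ 0 := by
      have := (Finset.mem_Icc.1 hk).1
      omega
    show c' k * θ^(n-k) = θ^(n-k) * (a k^2 * D k)
    rw [hc']
    simp only [if_neg hkne]
    ring
  have hsumb : Summable b := by
    apply Summable.add
    · apply Summable.of_nonneg_of_le (f := fun m => (r:ℝ) * ((r:ℝ)⁻¹)^m)
        (fun m => by positivity)
      · intro m
        rcases Nat.eq_zero_or_pos m with hm | hm
        · subst hm
          simp only [Nat.zero_sub, pow_zero, inv_one]
          calc (1:ℝ) ≤ (r:ℝ) := by linarith
            _ = (r:ℝ) * ((r:ℝ)⁻¹)^0 := by simp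
        · obtain ⟨n, rfl⟩ : ∃ n, m = n + 1 := ⟨m - 1, by omega⟩
          have hrne : (r:ℝ) ≠ 0 := by positivity
          have hrpne : ((r:ℝ)^n) ≠ 0 := by positivity
          apply le_of_eq
          simp only [Nat.add_sub_cancel]
          rw [inv_pow, pow_succ]
          field_simp
      · exact (summable_geometric_of_lt_one (by positivity)
          (inv_lt_one_of_one_lt₀ hrR1)).mul_left _
    · exact hsumF.mul_left C₄
  -- Borel-Cantelli
  have htsum : (∑' m, (volume.restrict (Set.Ico (0:ℝ) 1)) (Bad m)) ≠ ⊤ := by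
    have hbb : ∀ m, (volume.restrict (Set.Ico (0:ℝ) 1)) (Bad m)
        ≤ (if m < K₁ then 1 else 0) + ENNReal.ofReal (b m) := by
      intro m
      by_cases hm : m < K₁
      · rw [if_pos hm]
        have h1 : (volume.restrict (Set.Ico (0:ℝ) 1)) (Bad m)
            ≤ (volume.restrict (Set.Ico (0:ℝ) 1)) Set.univ := measure_mono (Set.subset_univ _)
        rw [Measure.restrict_apply_univ, Real.volume_Ico] at h1
        calc (volume.restrict (Set.Ico (0:ℝ) 1)) (Bad m) ≤ ENNReal.ofReal (1 - 0) := h1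
          _ = 1 := by norm_num
          _ ≤ 1 + ENNReal.ofReal (b m) := le_self_add
      · rw [if_neg hm, zero_add]
        push_neg at hm
        calc (volume.restrict (Set.Ico (0:ℝ) 1)) (Bad m)
            ≤ ENNReal.ofReal (((r:ℝ)^(Λ m))⁻¹) := hμ m
          _ ≤ ENNReal.ofReal (b m) := ENNReal.ofReal_le_ofReal (hnum m hm)
    have h2 : (∑' m, (volume.restrict (Set.Ico (0:ℝ) 1)) (Bad m))
        ≤ (∑' m, ((if m < K₁ then 1 else 0) + ENNReal.ofReal (b m))) :=
      ENNReal.tsum_le_tsum hbb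
    rw [ENNReal.tsum_add] at h2
    have h3 : (∑' m, (if m < K₁ then (1:ENNReal) else 0)) = ∑ m ∈ Finset.range K₁,
        (if m < K₁ then (1:ENNReal) else 0) := by
      apply tsum_eq_sum
      intro m hm
      rw [if_neg]
      simpa using hm
    have h4 : (∑' m, (if m < K₁ then (1:ENNReal) else 0)) ≠ ⊤ := by
      rw [h3]
      exact (lt_of_le_of_lt (Finset.sum_le_sum (fun m _ => by
        split
        · exact le_refl (1:ENNReal)
        · exact zero_le)) (by
          rw [Finset.sum_const, Finset.card_range, nsmul_eq_mul, mul_one]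
          exact ENNReal.natCast_lt_top K₁)).ne
    have h5 : (∑' m, ENNReal.ofReal (b m)) ≠ ⊤ := by
      rw [← ENNReal.ofReal_tsum_of_nonneg hb0 hsumb]
      exact ENNReal.ofReal_ne_top
    exact ne_top_of_le_ne_top (ENNReal.add_ne_top.2 ⟨h4, h5⟩) h2
  have hae := MeasureTheory.ae_eventually_notMem htsum
  filter_upwards [hae, MeasureTheory.ae_restrict_mem measurableSet_Ico] with x hxe hx
  rw [eventually_atTop] at hxe ⊢
  obtain ⟨M, hM⟩ := hxe
  refine ⟨max M K₁, fun m hm h h0 hhle => ?_⟩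
  have hmM : M ≤ m := le_trans (le_max_left _ _) hm
  have hmK : K₁ ≤ m := le_trans (le_max_right _ _) hm
  have hm2 : 2 ≤ m := le_trans hK₁2 hmK
  have hxB := hM m hmM
  have hfr : Int.fract ((r:ℝ) ^ (m - Λ m) * x) < 1 - ((r:ℝ) ^ (Λ m))⁻¹ := by
    by_contra hcon
    push_neg at hcon
    exact hxB ⟨hx, hcon⟩
  have hΛm : Λ m ≤ m - 1 := hΛle m
  -- r^(m-Λ) * h ≤ r^(-Λ)
  have hrp : (0:ℝ) < (r:ℝ) ^ (m - Λ m) := by positivity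
  have hpowmul : (r:ℝ) ^ (m - Λ m) * ((r:ℝ) ^ m)⁻¹ = ((r:ℝ) ^ (Λ m))⁻¹ := by
    have hsplit : (r:ℝ) ^ m = (r:ℝ) ^ (m - Λ m) * (r:ℝ) ^ (Λ m) := by
      rw [← pow_add]
      congr 1
      omega
    rw [hsplit]
    field_simp
  have hbound : (r:ℝ) ^ (m - Λ m) * h ≤ ((r:ℝ) ^ (Λ m))⁻¹ := by
    calc (r:ℝ) ^ (m - Λ m) * h ≤ (r:ℝ) ^ (m - Λ m) * ((r:ℝ) ^ m)⁻¹ :=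
          mul_le_mul_of_nonneg_left hhle (le_of_lt hrp)
      _ = ((r:ℝ) ^ (Λ m))⁻¹ := hpowmul
  have hk0 : ((m - Λ m : ℕ) : ℤ) ≤ kZero r x h := by
    apply kZero_ge r hr x h h0
    linarith [hfr, hbound]
  have hindex : m - Λ m + 1 ≤ (kZero r x h + 1).toNat := by
    have h1 : ((m - Λ m + 1 : ℕ) : ℤ) ≤ kZero r x h + 1 := by push_cast; omega
    have h2 : (0:ℤ) ≤ kZero r x h + 1 := le_trans (by positivity) h1
    omega
  calc (∑ k ∈ Finset.Icc (kZero r x h + 1).toNat m, |a k|)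
      ≤ ∑ k ∈ Finset.Icc (m - Λ m + 1) m, |a k| := by
        apply Finset.sum_le_sum_of_subset_of_nonneg
        · exact Finset.Icc_subset_Icc hindex le_rfl
        · intro k _ _; positivity
    _ ≤ ε * A m ^ β := hPΛ m

/-- **Lemma 4.1.** Under (A1) and (A2), for Lebesgue-a.e. `x ∈ [0,1)`,
`A_{m(h)}^{−1/2+δ/8} · Σ_{k=k_0(x,h)+1}^{m(h)} |a_k| → 0` as `h ↓ 0`. -/
theorem stmt13 (r : ℕ) (hr : 2 ≤ r) (a : ℕ → ℝ) (δ : ℝ) (hδ : δ ∈ Set.Ioc (0:ℝ) 1)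
    (hA1 : Tendsto (Asum a) atTop atTop)
    (hA2 : (fun n => (a n) ^ 2) =O[atTop] fun n => Asum a n ^ (1 - δ)) :
    ∀ᵐ x ∂(volume.restrict (Set.Ico (0:ℝ) 1)),
      Tendsto
        (fun h : ℝ =>
          Asum a (mIdx r h) ^ (-(1:ℝ)/2 + δ/8) *
            ∑ k ∈ Finset.Icc (kZero r x h + 1).toNat (mIdx r h), |a k|)
        (𝓝[>] (0:ℝ)) (𝓝 0) := by
  have hmain : ∀ q : ℕ, ∀ᵐ x ∂(volume.restrict (Set.Ico (0:ℝ) 1)), ∀ᶠ m in atTop, ∀ h : ℝ,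
      0 < h → h ≤ ((r:ℝ)^m)⁻¹ →
      (∑ k ∈ Finset.Icc (kZero r x h + 1).toNat m, |a k|)
        ≤ (1/((q:ℝ)+1)) * Asum a m ^ ((1:ℝ)/2 - δ/8) :=
    fun q => main_eps r hr a δ hδ hA1 hA2 (1/((q:ℝ)+1)) (by positivity)
  rw [← MeasureTheory.ae_all_iff] at hmain
  filter_upwards [hmain] with x hx
  rw [Metric.tendsto_nhds]
  intro ε' hε'
  obtain ⟨q, hq⟩ := exists_nat_one_div_lt hε'
  have hxq := hx q
  rw [eventually_atTop] at hxq
  obtain ⟨M₀, hM₀⟩ := hxq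
  obtain ⟨M₁, hM₁⟩ := (hA1.eventually_ge_atTop 1).exists_forall_of_atTop
  set M := max (max M₀ M₁) 1 with hM
  have hrMpos : (0:ℝ) < ((r:ℝ)^M)⁻¹ := by
    have : (0:ℝ) < (r:ℝ) := by positivity
    positivity
  have hev : Set.Ioo (0:ℝ) (((r:ℝ)^M)⁻¹) ∈ 𝓝[>] (0:ℝ) :=
    Ioo_mem_nhdsGT_of_mem ⟨le_rfl, hrMpos⟩
  filter_upwards [hev] with h hh
  obtain ⟨h0, hlt⟩ := hh
  have hmge : M ≤ mIdx r h := mIdx_ge r hr M h h0 hlt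
  have hrR1 : (1:ℝ) ≤ (r:ℝ) := by exact_mod_cast le_trans one_le_two hr
  have hh1 : h ≤ 1 := by
    have h1 : (1:ℝ) ≤ (r:ℝ)^M := one_le_pow₀ hrR1
    have h2 : ((r:ℝ)^M)⁻¹ ≤ 1 := by
      rw [inv_le_one_iff₀]
      right
      exact h1
    linarith
  have hle : h ≤ ((r:ℝ)^(mIdx r h))⁻¹ := mIdx_h_le r hr h h0 hh1
  have hS := hM₀ (mIdx r h) (le_trans (le_trans (le_max_left _ _) (le_max_left _ _)) hmge)
    h h0 hle
  have hA1m : 1 ≤ Asum a (mIdx r h) :=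
    hM₁ (mIdx r h) (le_trans (le_trans (le_max_right _ _) (le_max_left _ _)) hmge)
  have hApos : (0:ℝ) < Asum a (mIdx r h) := lt_of_lt_of_le one_pos hA1m
  have hexp0 : (0:ℝ) ≤ Asum a (mIdx r h) ^ (-(1:ℝ)/2 + δ/8) :=
    Real.rpow_nonneg (le_of_lt hApos) _
  have hsum0 : (0:ℝ) ≤ ∑ k ∈ Finset.Icc (kZero r x h + 1).toNat (mIdx r h), |a k| :=
    Finset.sum_nonneg fun k _ => abs_nonneg _
  have hexpr : Asum a (mIdx r h) ^ (-(1:ℝ)/2 + δ/8) *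
      (∑ k ∈ Finset.Icc (kZero r x h + 1).toNat (mIdx r h), |a k|) ≤ 1/((q:ℝ)+1) := by
    calc Asum a (mIdx r h) ^ (-(1:ℝ)/2 + δ/8) *
        (∑ k ∈ Finset.Icc (kZero r x h + 1).toNat (mIdx r h), |a k|)
        ≤ Asum a (mIdx r h) ^ (-(1:ℝ)/2 + δ/8) *
          ((1/((q:ℝ)+1)) * Asum a (mIdx r h) ^ ((1:ℝ)/2 - δ/8)) :=
          mul_le_mul_of_nonneg_left hS hexp0
      _ = (1/((q:ℝ)+1)) * (Asum a (mIdx r h) ^ (-(1:ℝ)/2 + δ/8) *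
          Asum a (mIdx r h) ^ ((1:ℝ)/2 - δ/8)) := by ring
      _ = 1/((q:ℝ)+1) := by
          rw [← Real.rpow_add hApos]
          have he : (-(1:ℝ)/2 + δ/8) + ((1:ℝ)/2 - δ/8) = 0 := by ring
          rw [he, Real.rpow_zero, mul_one]
  rw [Real.dist_eq, sub_zero, abs_of_nonneg (mul_nonneg hexp0 hsum0)]
  exact lt_of_le_of_lt hexpr hq
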